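/- For a positive integer k, let X_1, ..., X_{4k} be independent uniform random variables on {-1, +1}. Let S_1 = X_1 + ... + X_{4k} and S_2 = (X_1 + ... + X_{2k}) - (X_{2k+1} + ... + X_{4k}). Then E[|S_1·S_2|] = (4k)^2 / 2^{4k+1} · binom(2k, k)^2. -/

import Mathlib

open Finset

noncomputable def sg (b : Bool) : ℝ := if b then 1 else -1

noncomputable def fb (m : ℕ) : ℝ :=
  ∑ i ∈ Finset.range (m + 1), (m.choose i : ℝ) * |2 * (i : ℝ) - m|

lemma count_lemma {α : Type*} [Fintype α] [DecidableEq α] (G : ℕ → ℝ) :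
    ∑ σ : α → Bool, G #(univ.filter (fun i => σ i = true)) =
      ∑ m ∈ range (Fintype.card α + 1), (Fintype.card α).choose m * G m := by
  have h1 : ∑ σ : α → Bool, G #(univ.filter (fun i => σ i = true)) =
      ∑ s : Finset α, G #s := by
    refine Finset.sum_bij' (fun σ _ => univ.filter (fun i => σ i = true))
      (fun s _ => fun i => decide (i ∈ s)) ?_ ?_ ?_ ?_ ?_ <;>
      try (intros; first | rfl | simp | (ext i; simp) | (funext i; simp))
  rw [h1]
  have h2 : (univ : Finset (Finset α)) = (univ : Finset α).powerset := by
    rw [Finset.powerset_univ]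
  rw [h2, Finset.sum_powerset_apply_card, Finset.card_univ]
  simp [nsmul_eq_mul]

lemma sgn_sum {α : Type*} [Fintype α] [DecidableEq α] (a : α → Bool) :
    ∑ i, sg (a i) = 2 * #(univ.filter (fun i => a i = true)) - Fintype.card α := by
  have : ∀ i, sg (a i) = 2 * (if a i = true then (1:ℝ) else 0) - 1 := by
    intro i; cases a i <;> norm_num [sg]
  simp only [this]
  rw [Finset.sum_sub_distrib, ← Finset.mul_sum, Finset.sum_boole, Finset.sum_const,
    Finset.card_univ]
  simp

lemma cube_sum {α : Type*} [Fintype α] [DecidableEq α] :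
    ∑ a : α → Bool, |∑ i, sg (a i)| = fb (Fintype.card α) := by
  have : ∀ a : α → Bool, |∑ i, sg (a i)|
      = |2 * (#(univ.filter (fun i => a i = true)) : ℝ) - Fintype.card α| := by
    intro a; rw [sgn_sum]
  rw [Finset.sum_congr rfl (fun a _ => this a)]
  rw [count_lemma (fun m => |2 * (m:ℝ) - Fintype.card α|)]
  rfl

lemma abs_step (i m : ℕ) :
    |2 * (i:ℝ) - (m+1)| + |2 * ((i:ℕ)+1:ℝ) - (m+1)|
      = 2 * |2 * (i:ℝ) - m| + (if 2 * i = m then 2 else 0) := by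
  rcases lt_trichotomy (2 * i) m with h | h | h
  · have h' : (2:ℝ) * i + 1 ≤ m := by exact_mod_cast h
    rw [if_neg (by omega), abs_of_nonpos (by linarith), abs_of_nonpos (by linarith),
      abs_of_nonpos (by linarith)]
    ring
  · have h' : (2:ℝ) * i = m := by exact_mod_cast h
    have h2 : 2 * ((i:ℝ)+1) - ((m:ℝ)+1) = 1 := by rw [← h']; ring
    have h3 : 2 * (i:ℝ) - ((m:ℝ)+1) = -1 := by rw [← h']; ring
    rw [if_pos h]
    push_cast
    have h4 : 2 * (i:ℝ) - (m:ℝ) = 0 := by rw [← h']; ring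
    rw [h2, h3, h4]
    norm_num
  · have h' : (m:ℝ) + 1 ≤ 2 * i := by exact_mod_cast h
    rw [if_neg (by omega), abs_of_nonneg (by linarith), abs_of_nonneg (by linarith),
      abs_of_nonneg (by linarith)]
    ring

lemma central_succ (n : ℕ) : (2*n+2).choose (n+1) = 2 * ((2*n+1).choose n) := by
  have h1 : (2*n+2).choose (n+1) = (2*n+1).choose n + (2*n+1).choose (n+1) :=
    Nat.choose_succ_succ (2*n+1) n
  have h2 : (2*n+1).choose (n+1) = (2*n+1).choose n := by
    rw [← Nat.choose_symm (by omega : n + 1 ≤ 2*n+1)]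
    congr 1
    omega
  omega

lemma fb_succ (m : ℕ) :
    fb (m+1) = 2 * fb m + (if m % 2 = 0 then 2 * (m.choose (m/2) : ℝ) else 0) := by
  have key : fb (m+1) = ∑ i ∈ range (m+1), (m.choose i : ℝ) *
      (|2 * (i:ℝ) - (m+1)| + |2 * ((i:ℕ)+1:ℝ) - (m+1)|) := by
    rw [fb]
    rw [Finset.sum_range_succ' (fun i => ((m+1).choose i : ℝ) * |2 * (i : ℝ) - (m+1:ℕ)|)]
    push_cast
    have expand : ∀ i ∈ range (m+1), (((m+1).choose (i+1) : ℝ)) * |2 * ((i:ℝ)+1) - ((m:ℝ)+1)|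
        = (m.choose i : ℝ) * |2 * ((i:ℝ)+1) - ((m:ℝ)+1)|
          + (m.choose (i+1) : ℝ) * |2 * ((i:ℝ)+1) - ((m:ℝ)+1)| := by
      intro i _
      rw [Nat.choose_succ_succ m i]
      push_cast
      ring
    rw [Finset.sum_congr rfl expand, Finset.sum_add_distrib]
    have shift : ∑ i ∈ range (m+1), (m.choose (i+1) : ℝ) * |2 * ((i:ℝ)+1) - ((m:ℝ)+1)|
        + (m.choose 0 : ℝ) * |2 * (0:ℝ) - ((m:ℝ)+1)|
        = ∑ i ∈ range (m+2), (m.choose i : ℝ) * |2 * (i:ℝ) - ((m:ℝ)+1)| := by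
      rw [Finset.sum_range_succ' (fun i => (m.choose i : ℝ) * |2 * (i:ℝ) - ((m:ℝ)+1)|)]
      push_cast
      ring
    have last0 : ∑ i ∈ range (m+2), (m.choose i : ℝ) * |2 * (i:ℝ) - ((m:ℝ)+1)|
        = ∑ i ∈ range (m+1), (m.choose i : ℝ) * |2 * (i:ℝ) - ((m:ℝ)+1)| := by
      rw [Finset.sum_range_succ, Nat.choose_succ_self]
      simp
    simp only [mul_add, Finset.sum_add_distrib]
    rw [last0] at shift
    simp only [Nat.choose_zero_right, Nat.cast_one, one_mul] at shift ⊢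
    simp only [show ∀ x:ℝ, 2*(x+1) = 2*x+2 from fun x => by ring] at shift ⊢
    ring_nf at shift ⊢
    simp only [show ∀ x:ℝ, 1 + x*2 - (m:ℝ) = 1 - (m:ℝ) + x*2 from fun x => by ring] at shift
    linarith [shift]
  rw [key]
  have step : ∀ i ∈ range (m+1), (m.choose i : ℝ) * (|2 * (i:ℝ) - (m+1)| + |2 * ((i:ℕ)+1:ℝ) - (m+1)|)
      = 2 * ((m.choose i : ℝ) * |2*(i:ℝ) - (m:ℝ)|) + (m.choose i : ℝ) * (if 2*i = m then (2:ℝ) else 0) := by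
    intro i _
    rw [abs_step i m]
    ring
  rw [Finset.sum_congr rfl step, Finset.sum_add_distrib, ← Finset.mul_sum, ← fb]
  congr 1
  · rcases Nat.even_or_odd m with ⟨r, hr⟩ | ⟨r, hr⟩
    · subst hr
      have hcond : ∀ i, (if 2*i = r+r then (2:ℝ) else 0) = if i = r then (2:ℝ) else 0 := by
        intro i
        by_cases h : i = r
        · subst h; rw [if_pos (by omega), if_pos rfl]
        · rw [if_neg (by omega), if_neg h]
      simp only [hcond, mul_ite, mul_zero]
      rw [Finset.sum_ite_eq' (range (r+r+1)) r (fun i => ((r+r).choose i : ℝ) * 2)]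
      rw [if_pos (by simp [Finset.mem_range])]
      rw [if_pos (by omega)]
      rw [show (r+r)/2 = r by omega]
      ring
    · subst hr
      have hcond : ∀ i, (if 2*i = 2*r+1 then (2:ℝ) else 0) = 0 := by
        intro i; rw [if_neg (by omega)]
      simp only [hcond, mul_zero, Finset.sum_const_zero]
      rw [if_neg (by omega)]

lemma fb_closed : ∀ m : ℕ, fb m = 2 * m * (((m-1).choose ((m-1)/2) : ℕ) : ℝ) := by
  intro m
  induction m with
  | zero => simp [fb]
  | succ m ih =>
    rw [fb_succ, ih]
    rcases Nat.even_or_odd m with ⟨r, hr⟩ | ⟨r, hr⟩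
    · subst hr
      rw [if_pos (by omega)]
      rw [show (r+r+1-1)/2 = (r+r)/2 by omega, show r+r+1-1 = r+r by omega]
      have key2 : 2 * ((r+r:ℕ):ℝ) * (((r+r-1).choose ((r+r-1)/2):ℕ):ℝ)
          = ((r+r:ℕ):ℝ) * (((r+r).choose ((r+r)/2):ℕ):ℝ) := by
        rcases r with _ | r
        · norm_num
        · have hc := central_succ r
          rw [show r+1+(r+1)-1 = 2*r+1 by omega, show (2*r+1)/2 = r by omega,
              show r+1+(r+1) = 2*r+2 by omega, show (2*r+2)/2 = r+1 by omega, hc]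
          push_cast
          ring
      push_cast at key2 ⊢
      ring_nf at key2 ⊢
      nlinarith [key2]
    · subst hr
      rw [if_neg (by omega)]
      have hkey : (2*r+1) * ((2*r).choose r) = (r+1) * ((2*r+1).choose r) := by
        have h1 := Nat.add_one_mul_choose_eq (2*r) r
        have h2 : (2*r+1).choose (r+1) = (2*r+1).choose r := by
          rw [← Nat.choose_symm (by omega : r + 1 ≤ 2*r+1)]
          congr 1
          omega
        calc (2*r+1) * ((2*r).choose r) = (2*r).succ * ((2*r).choose r) := by rfl
          _ = (2*r+1).choose (r+1) * (r+1) := h1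
          _ = (r+1) * ((2*r+1).choose r) := by rw [h2]; ring
      rw [show 2*r+1-1 = 2*r by omega, show (2*r)/2 = r by omega,
        show (2*r+1+1-1)/2 = r by omega, show 2*r+1+1-1 = 2*r+1 by omega]
      have : ((2*r+1 : ℕ) : ℝ) * (((2*r).choose r : ℕ) : ℝ) = ((r+1 : ℕ) : ℝ) * (((2*r+1).choose r : ℕ) : ℝ) := by
        exact_mod_cast congrArg (Nat.cast : ℕ → ℝ) hkey
      push_cast at this ⊢
      nlinarith [this]

open Nat in
lemma fact_ne (n : ℕ) : ((n ! : ℕ) : ℝ) ≠ 0 := by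
  exact_mod_cast (Nat.factorial_pos n).ne'

open Nat in
lemma pt_odd (r c : ℕ) :
    ((2 * r + 1 : ℝ) * (2 * c + 1)) * ((2*r+2*c+2).choose (2*r+1) : ℝ) *
        ((2*r).choose r : ℝ) * ((2*c).choose c : ℝ)
      = ((r+c+1 : ℝ))^2 * ((2*r+2*c+2).choose (r+c+1) : ℝ) *
        ((r+c).choose r : ℝ) * ((r+c).choose c : ℝ) := by
  rw [Nat.cast_choose ℝ (show 2*r+1 ≤ 2*r+2*c+2 by omega),
      Nat.cast_choose ℝ (show r ≤ 2*r by omega),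
      Nat.cast_choose ℝ (show c ≤ 2*c by omega),
      Nat.cast_choose ℝ (show r+c+1 ≤ 2*r+2*c+2 by omega),
      Nat.cast_choose ℝ (show r ≤ r+c by omega),
      Nat.cast_choose ℝ (show c ≤ r+c by omega)]
  rw [show 2*r+2*c+2 - (2*r+1) = 2*c+1 by omega, show 2*r - r = r by omega,
      show 2*c - c = c by omega, show 2*r+2*c+2 - (r+c+1) = r+c+1 by omega,
      show r+c-r = c by omega, show r+c-c = r by omega]
  have e1 : ((2*r+1)! : ℝ) = (2*(r:ℝ)+1) * ((2*r)! : ℕ) := by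
    rw [show (2*r+1) = (2*r)+1 by rfl, Nat.factorial_succ]; push_cast; ring
  have e2 : ((2*c+1)! : ℝ) = (2*(c:ℝ)+1) * ((2*c)! : ℕ) := by
    rw [show (2*c+1) = (2*c)+1 by rfl, Nat.factorial_succ]; push_cast; ring
  have e3 : ((r+c+1)! : ℝ) = ((r:ℝ)+c+1) * ((r+c)! : ℕ) := by
    rw [show (r+c+1) = (r+c)+1 by rfl, Nat.factorial_succ]; push_cast; ring
  rw [e1, e2, e3]
  have h1 := fact_ne (2*r); have h2 := fact_ne (2*c); have h3 := fact_ne (r+c)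
  have h4 := fact_ne r; have h5 := fact_ne c; have h6 := fact_ne (2*r+2*c+2)
  have h7 : (2*(r:ℝ)+1) ≠ 0 := by positivity
  have h8 : (2*(c:ℝ)+1) ≠ 0 := by positivity
  have h9 : ((r:ℝ)+c+1) ≠ 0 := by positivity
  field_simp

open Nat in
lemma pt_even (a b : ℕ) :
    ((2 * ((a:ℝ)+1)) * (2 * ((b:ℝ)+1))) * ((2*a+2*b+4).choose (2*a+2) : ℝ) *
        ((2*a+1).choose a : ℝ) * ((2*b+1).choose b : ℝ)
      = (((a:ℝ)+b+2))^2 * ((2*a+2*b+4).choose (a+b+2) : ℝ) *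
        ((a+b+1).choose a : ℝ) * ((a+b+1).choose b : ℝ) := by
  rw [Nat.cast_choose ℝ (show 2*a+2 ≤ 2*a+2*b+4 by omega),
      Nat.cast_choose ℝ (show a ≤ 2*a+1 by omega),
      Nat.cast_choose ℝ (show b ≤ 2*b+1 by omega),
      Nat.cast_choose ℝ (show a+b+2 ≤ 2*a+2*b+4 by omega),
      Nat.cast_choose ℝ (show a ≤ a+b+1 by omega),
      Nat.cast_choose ℝ (show b ≤ a+b+1 by omega)]
  rw [show 2*a+2*b+4 - (2*a+2) = 2*b+2 by omega, show 2*a+1 - a = a+1 by omega,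
      show 2*b+1 - b = b+1 by omega, show 2*a+2*b+4 - (a+b+2) = a+b+2 by omega,
      show a+b+1-a = b+1 by omega, show a+b+1-b = a+1 by omega]
  have e1 : ((2*a+2)! : ℝ) = (2*(a:ℝ)+2) * (2*(a:ℝ)+1) * ((2*a)! : ℕ) := by
    rw [show (2*a+2) = (2*a+1)+1 by rfl, Nat.factorial_succ,
        show (2*a+1) = (2*a)+1 by rfl, Nat.factorial_succ]; push_cast; ring
  have e2 : ((2*b+2)! : ℝ) = (2*(b:ℝ)+2) * (2*(b:ℝ)+1) * ((2*b)! : ℕ) := by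
    rw [show (2*b+2) = (2*b+1)+1 by rfl, Nat.factorial_succ,
        show (2*b+1) = (2*b)+1 by rfl, Nat.factorial_succ]; push_cast; ring
  have e3 : ((2*a+1)! : ℝ) = (2*(a:ℝ)+1) * ((2*a)! : ℕ) := by
    rw [show (2*a+1) = (2*a)+1 by rfl, Nat.factorial_succ]; push_cast; ring
  have e4 : ((2*b+1)! : ℝ) = (2*(b:ℝ)+1) * ((2*b)! : ℕ) := by
    rw [show (2*b+1) = (2*b)+1 by rfl, Nat.factorial_succ]; push_cast; ring
  have e5 : ((a+b+2)! : ℝ) = ((a:ℝ)+b+2) * ((a+b+1)! : ℕ) := by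
    rw [show (a+b+2) = (a+b+1)+1 by rfl, Nat.factorial_succ]; push_cast; ring
  have e6 : ((a+1)! : ℝ) = ((a:ℝ)+1) * ((a)! : ℕ) := by
    rw [Nat.factorial_succ]; push_cast; ring
  have e7 : ((b+1)! : ℝ) = ((b:ℝ)+1) * ((b)! : ℕ) := by
    rw [Nat.factorial_succ]; push_cast; ring
  rw [e1, e2, e3, e4, e5, e6, e7]
  have h1 := fact_ne (2*a); have h2 := fact_ne (2*b); have h3 := fact_ne (a+b+1)
  have h4 := fact_ne a; have h5 := fact_ne b; have h6 := fact_ne (2*a+2*b+4)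
  have h7 : (2*(a:ℝ)+1) ≠ 0 := by positivity
  have h8 : (2*(b:ℝ)+1) ≠ 0 := by positivity
  have h9 : ((a:ℝ)+b+2) ≠ 0 := by positivity
  have h10 : (2*(a:ℝ)+2) ≠ 0 := by positivity
  have h11 : (2*(b:ℝ)+2) ≠ 0 := by positivity
  have h12 : ((a:ℝ)+1) ≠ 0 := by positivity
  have h13 : ((b:ℝ)+1) ≠ 0 := by positivity
  field_simp

lemma sum_range_split (N : ℕ) (f : ℕ → ℝ) :
    ∑ j ∈ range (2*N+1), f j
      = ∑ s ∈ range (N+1), f (2*s) + ∑ s ∈ range N, f (2*s+1) := by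
  induction N with
  | zero => simp
  | succ N ih =>
    rw [show 2*(N+1)+1 = (2*N+1)+1+1 by ring, Finset.sum_range_succ, Finset.sum_range_succ, ih,
        Finset.sum_range_succ (fun s => f (2*s)) (N+1), Finset.sum_range_succ (fun s => f (2*s+1)) N]
    rw [show 2*(N+1) = 2*N+1+1 by ring]
    ring

lemma sum_w (K : ℕ) :
    ∑ j ∈ range (2*K+1), ((K.choose (j/2) : ℝ) * (K.choose ((2*K-j)/2) : ℝ))
      = ((2*K+1).choose K : ℝ) := by
  rw [sum_range_split K (fun j => (K.choose (j/2) : ℝ) * (K.choose ((2*K-j)/2) : ℝ))]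
  have heven : ∑ s ∈ range (K+1), ((K.choose ((2*s)/2) : ℝ) * (K.choose ((2*K-2*s)/2) : ℝ))
      = (((K+K).choose K : ℕ) : ℝ) := by
    have h1 : ∀ s ∈ range (K+1), ((K.choose ((2*s)/2) : ℝ) * (K.choose ((2*K-2*s)/2) : ℝ))
        = ((K.choose s * K.choose (K-s) : ℕ) : ℝ) := by
      intro s hs
      rw [show (2*s)/2 = s by omega, show (2*K-2*s)/2 = K - s by omega]
      push_cast; ring
    rw [Finset.sum_congr rfl h1, ← Nat.cast_sum]
    congr 1
    rw [Nat.add_choose_eq, Finset.Nat.sum_antidiagonal_eq_sum_range_succ_mk]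
  rw [heven]
  rcases K with _ | L
  · norm_num
  · have hodd : ∑ s ∈ range (L+1), (((L+1).choose ((2*s+1)/2) : ℝ) * ((L+1).choose ((2*(L+1)-(2*s+1))/2) : ℝ))
        = ((((L+1)+(L+1)).choose L : ℕ) : ℝ) := by
      have h1 : ∀ s ∈ range (L+1), (((L+1).choose ((2*s+1)/2) : ℝ) * ((L+1).choose ((2*(L+1)-(2*s+1))/2) : ℝ))
          = (((L+1).choose s * (L+1).choose (L-s) : ℕ) : ℝ) := by
        intro s hs
        simp only [Finset.mem_range] at hs
        rw [show (2*s+1)/2 = s by omega, show (2*(L+1)-(2*s+1))/2 = L - s by omega]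
        push_cast; ring
      rw [Finset.sum_congr rfl h1, ← Nat.cast_sum]
      congr 1
      rw [Nat.add_choose_eq, Finset.Nat.sum_antidiagonal_eq_sum_range_succ_mk]
    rw [hodd]
    have pascal : (2*(L+1)+1).choose (L+1) = ((L+1)+(L+1)).choose L + ((L+1)+(L+1)).choose (L+1) := by
      rw [show 2*(L+1)+1 = ((L+1)+(L+1))+1 by ring]
      exact Nat.choose_succ_succ ((L+1)+(L+1)) L
    rw [pascal]
    push_cast; ring

lemma final_identity (k : ℕ) (hk : 0 < k) :
    ∑ m ∈ range (2 * k + 1), ((2 * k).choose m : ℝ) * (4 * (fb (2 * k - m) * fb m))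
      = 8 * k ^ 2 * ((2 * k).choose k : ℝ) ^ 2 := by
  have hterm : ∀ m ∈ range (2*k+1),
      ((2*k).choose m : ℝ) * (4 * (fb (2*k-m) * fb m))
        = 16 * (k:ℝ)^2 * ((2*k).choose k : ℝ) *
            (if m = 0 ∨ m = 2*k then 0
             else ((k-1).choose ((m-1)/2) : ℝ) * ((k-1).choose ((2*k-m-1)/2) : ℝ)) := by
    intro m hm
    simp only [Finset.mem_range] at hm
    rcases eq_or_ne m 0 with rfl | hm0
    · rw [if_pos (Or.inl rfl), fb_closed 0]
      push_cast; ring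
    rcases eq_or_ne m (2*k) with rfl | hm2k
    · rw [if_pos (Or.inr rfl), show 2*k - 2*k = 0 by omega, fb_closed 0]
      push_cast; ring
    rw [if_neg (by tauto)]
    rcases Nat.even_or_odd m with ⟨r, hr⟩ | ⟨r, hr⟩
    · obtain ⟨a, ha⟩ : ∃ a, r = a + 1 := ⟨r-1, by omega⟩
      obtain ⟨b, hb⟩ : ∃ b, k = a + b + 2 := ⟨k - a - 2, by omega⟩
      subst hr ha hb
      rw [show (a+1)+(a+1) = 2*a+2 by ring]
      rw [show 2*(a+b+2) = 2*a+2*b+4 by ring, show 2*a+2*b+4 - (2*a+2) = 2*b+2 by omega,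
          show a+b+2-1 = a+b+1 by omega, fb_closed (2*b+2), fb_closed (2*a+2)]
      simp only [show 2*b+2-1 = 2*b+1 from by omega, show 2*a+2-1 = 2*a+1 from by omega,
          show (2*b+1)/2 = b from by omega, show (2*a+1)/2 = a from by omega,
          show (2*a+2-1)/2 = a from by omega, show (2*b+2-1)/2 = b from by omega]
      have := pt_even a b
      push_cast at this ⊢
      nlinarith [this]
    · obtain ⟨c, hc⟩ : ∃ c, k = r + c + 1 := ⟨k - r - 1, by omega⟩
      subst hr hc
      rw [show 2*(r+c+1) = 2*r+2*c+2 by ring, show 2*r+2*c+2 - (2*r+1) = 2*c+1 by omega,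
          show r+c+1-1 = r+c by omega, fb_closed (2*c+1), fb_closed (2*r+1)]
      simp only [show 2*c+1-1 = 2*c from by omega, show 2*r+1-1 = 2*r from by omega,
          show (2*c)/2 = c from by omega, show (2*r)/2 = r from by omega,
          show (2*c+1-1)/2 = c from by omega, show (2*r+1-1)/2 = r from by omega]
      have := pt_odd r c
      push_cast at this ⊢
      nlinarith [this]
  rw [Finset.sum_congr rfl hterm, ← Finset.mul_sum]
  obtain ⟨K, rfl⟩ : ∃ K, k = K + 1 := ⟨k-1, by omega⟩
  have hw : ∑ m ∈ range (2*(K+1)+1),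
      (if m = 0 ∨ m = 2*(K+1) then (0:ℝ)
       else (((K+1)-1).choose ((m-1)/2) : ℝ) * (((K+1)-1).choose ((2*(K+1)-m-1)/2) : ℝ))
        = ((2*K+1).choose K : ℝ) := by
    rw [show 2*(K+1)+1 = (2*K+1)+1+1 by ring, Finset.sum_range_succ, Finset.sum_range_succ']
    rw [if_pos (by omega : (2*K+1)+1 = 0 ∨ (2*K+1)+1 = 2*(K+1)), if_pos (Or.inl rfl)]
    have h1 : ∀ j ∈ range (2*K+1),
        (if j+1 = 0 ∨ j+1 = 2*(K+1) then (0:ℝ)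
         else (((K+1)-1).choose ((j+1-1)/2) : ℝ) * (((K+1)-1).choose ((2*(K+1)-(j+1)-1)/2) : ℝ))
          = (K.choose (j/2) : ℝ) * (K.choose ((2*K-j)/2) : ℝ) := by
      intro j hj
      simp only [Finset.mem_range] at hj
      rw [if_neg (by omega), show (K+1)-1 = K by omega, show (j+1-1)/2 = j/2 by omega,
          show 2*(K+1)-(j+1)-1 = 2*K-j by omega]
    rw [Finset.sum_congr rfl h1, sum_w K]
    ring
  rw [hw]
  have hc : (((2*(K+1)).choose (K+1) : ℕ) : ℝ) = 2 * ((2*K+1).choose K : ℝ) := by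
    exact_mod_cast congrArg (Nat.cast : ℕ → ℝ) (central_succ K)
  rw [hc]
  ring

lemma stageA (k : ℕ) :
    (∑ b : Fin (4 * k) → Bool,
        |(∑ j : Fin (4 * k), (if b j then (1 : ℝ) else -1)) *
          (∑ j : Fin (4 * k),
            (if (j : ℕ) < 2 * k then (if b j then (1 : ℝ) else -1)
             else -(if b j then (1 : ℝ) else -1)))|)
      = ∑ a : Fin (2*k) → Bool, ∑ c : Fin (2*k) → Bool,
          |((∑ i, sg (a i)) + (∑ i, sg (c i))) * ((∑ i, sg (a i)) - (∑ i, sg (c i)))| := by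
  have h42 : 2*k + 2*k = 4*k := by ring
  set E : Fin (2*k) ⊕ Fin (2*k) ≃ Fin (4*k) := finSumFinEquiv.trans (finCongr h42) with hE
  have hEl : ∀ i : Fin (2*k), ((E (Sum.inl i) : Fin (4*k)) : ℕ) = (i:ℕ) := by
    intro i; simp [hE, finCongr_apply]
  have hEr : ∀ i : Fin (2*k), ((E (Sum.inr i) : Fin (4*k)) : ℕ) = 2*k + (i:ℕ) := by
    intro i; simp [hE, finCongr_apply]; omega
  set e : (Fin (4*k) → Bool) ≃ (Fin (2*k) → Bool) × (Fin (2*k) → Bool) :=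
    (Equiv.arrowCongr E.symm (Equiv.refl Bool)).trans
      (Equiv.sumArrowEquivProdArrow _ _ _) with he
  have step2 : ∑ p : (Fin (2*k) → Bool) × (Fin (2*k) → Bool),
        |((∑ i, sg (p.1 i)) + (∑ i, sg (p.2 i))) * ((∑ i, sg (p.1 i)) - (∑ i, sg (p.2 i)))|
      = ∑ a : Fin (2*k) → Bool, ∑ c : Fin (2*k) → Bool,
          |((∑ i, sg (a i)) + (∑ i, sg (c i))) * ((∑ i, sg (a i)) - (∑ i, sg (c i)))| :=
    Fintype.sum_prod_type _
  rw [← step2]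
  apply Fintype.sum_equiv e
  intro b
  have h1 : (e b).1 = fun i => b (E (Sum.inl i)) := rfl
  have h2 : (e b).2 = fun i => b (E (Sum.inr i)) := rfl
  rw [h1, h2]
  have hS1 : (∑ j : Fin (4 * k), (if b j then (1 : ℝ) else -1))
      = (∑ i, sg (b (E (Sum.inl i)))) + (∑ i, sg (b (E (Sum.inr i)))) := by
    rw [← Equiv.sum_comp E (fun j => if b j then (1:ℝ) else -1), Fintype.sum_sum_type]
    rfl
  have hS2 : (∑ j : Fin (4 * k),
        (if (j : ℕ) < 2 * k then (if b j then (1 : ℝ) else -1)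
         else -(if b j then (1 : ℝ) else -1)))
      = (∑ i, sg (b (E (Sum.inl i)))) - (∑ i, sg (b (E (Sum.inr i)))) := by
    rw [← Equiv.sum_comp E (fun j => if (j : ℕ) < 2 * k then (if b j then (1:ℝ) else -1)
         else -(if b j then (1:ℝ) else -1)), Fintype.sum_sum_type]
    have hl : ∀ i : Fin (2*k), (if ((E (Sum.inl i) : Fin (4*k)) : ℕ) < 2 * k
          then (if b (E (Sum.inl i)) then (1:ℝ) else -1)
          else -(if b (E (Sum.inl i)) then (1:ℝ) else -1)) = sg (b (E (Sum.inl i))) := by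
      intro i
      rw [if_pos (by rw [hEl]; exact i.2)]
      rfl
    have hr : ∀ i : Fin (2*k), (if ((E (Sum.inr i) : Fin (4*k)) : ℕ) < 2 * k
          then (if b (E (Sum.inr i)) then (1:ℝ) else -1)
          else -(if b (E (Sum.inr i)) then (1:ℝ) else -1)) = - sg (b (E (Sum.inr i))) := by
      intro i
      rw [if_neg (by rw [hEr]; omega)]
      rfl
    rw [Finset.sum_congr rfl (fun i _ => hl i), Finset.sum_congr rfl (fun i _ => hr i),
      Finset.sum_neg_distrib]
    ring
  rw [hS1, hS2]

lemma abs4 (U V : ℝ) : |((U+V)+(U-V))*((U+V)-(U-V))| = 4*(|U| * |V|) := by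
  rw [show ((U+V)+(U-V)) = 2*U by ring, show ((U+V)-(U-V)) = 2*V by ring,
    abs_mul, abs_mul, abs_mul]
  rw [abs_two]
  ring

lemma stageB {n : ℕ} (a : Fin n → Bool) :
    ∑ c : Fin n → Bool,
        |((∑ i, sg (a i)) + (∑ i, sg (c i))) * ((∑ i, sg (a i)) - (∑ i, sg (c i)))|
      = ∑ σ : Fin n → Bool,
          4 * (|∑ i, if σ i then (0:ℝ) else sg (a i)| * |∑ i, if σ i then sg (a i) else 0|) := by
  have inv : Function.Involutive (fun (c : Fin n → Bool) => fun i => xor (c i) (a i)) := by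
    intro c; funext i; simp
  rw [← Equiv.sum_comp inv.toPerm
    (fun c => |((∑ i, sg (a i)) + (∑ i, sg (c i))) * ((∑ i, sg (a i)) - (∑ i, sg (c i)))|)]
  apply Finset.sum_congr rfl
  intro σ _
  simp only [Function.Involutive.coe_toPerm]
  have hsg : ∀ i : Fin n, sg (xor (σ i) (a i)) = (if σ i then -sg (a i) else sg (a i)) := by
    intro i
    cases hσ : σ i <;> cases ha : a i <;> norm_num [sg]
  have hU : (∑ i, sg (a i))
      = (∑ i, if σ i then (0:ℝ) else sg (a i)) + (∑ i, if σ i then sg (a i) else 0) := by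
    rw [← Finset.sum_add_distrib]
    apply Finset.sum_congr rfl
    intro i _
    by_cases h : σ i = true <;> simp [h]
  have hC : (∑ i : Fin n, sg (xor (σ i) (a i)))
      = (∑ i, if σ i then (0:ℝ) else sg (a i)) - (∑ i, if σ i then sg (a i) else 0) := by
    rw [Finset.sum_congr rfl (fun i _ => hsg i), ← Finset.sum_sub_distrib]
    apply Finset.sum_congr rfl
    intro i _
    by_cases h : σ i = true <;> simp [h]
  rw [hU, hC, abs4]

lemma stageC {n : ℕ} (σ : Fin n → Bool) :
    ∑ a : Fin n → Bool,
        (|∑ i, if σ i then (0:ℝ) else sg (a i)| * |∑ i, if σ i then sg (a i) else 0|)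
      = fb (n - #(univ.filter (fun i => σ i = true)))
          * fb #(univ.filter (fun i => σ i = true)) := by
  classical
  rw [← Equiv.sum_comp (Equiv.piEquivPiSubtypeProd (fun i => σ i = true) (fun _ => Bool)).symm
    (fun a => (|∑ i, if σ i then (0:ℝ) else sg (a i)| * |∑ i, if σ i then sg (a i) else 0|))]
  have key : ∀ q : (∀ _ : {x // σ x = true}, Bool) × (∀ _ : {x // ¬ σ x = true}, Bool),
      (|∑ i, if σ i then (0:ℝ)
          else sg ((Equiv.piEquivPiSubtypeProd (fun i => σ i = true) (fun _ => Bool)).symm q i)| *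
        |∑ i, if σ i
          then sg ((Equiv.piEquivPiSubtypeProd (fun i => σ i = true) (fun _ => Bool)).symm q i)
          else 0|)
      = (|∑ j : {x // ¬ σ x = true}, sg (q.2 j)| * |∑ j : {x // σ x = true}, sg (q.1 j)|) := by
    intro q
    have ha : ∀ i, (Equiv.piEquivPiSubtypeProd (fun i => σ i = true) (fun _ => Bool)).symm q i
        = if h : σ i = true then q.1 ⟨i, h⟩ else q.2 ⟨i, h⟩ := fun i => rfl
    have hV : (∑ i, if σ i
          then sg ((Equiv.piEquivPiSubtypeProd (fun i => σ i = true) (fun _ => Bool)).symm q i)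
          else (0:ℝ))
        = ∑ j : {x // σ x = true}, sg (q.1 j) := by
      rw [← Finset.sum_filter]
      rw [Finset.sum_subtype (p := fun i => σ i = true) (univ.filter (fun i => σ i = true)) (by simp)
        (fun i => sg ((Equiv.piEquivPiSubtypeProd (fun i => σ i = true) (fun _ => Bool)).symm q i))]
      apply Finset.sum_congr rfl
      intro j _
      congr 1
      rw [ha]
      rw [dif_pos j.2]
    have hU : (∑ i, if σ i
          then (0:ℝ)
          else sg ((Equiv.piEquivPiSubtypeProd (fun i => σ i = true) (fun _ => Bool)).symm q i))
        = ∑ j : {x // ¬ σ x = true}, sg (q.2 j) := by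
      have flip : ∀ i : Fin n, (if σ i then (0:ℝ)
            else sg ((Equiv.piEquivPiSubtypeProd (fun i => σ i = true) (fun _ => Bool)).symm q i))
          = (if ¬ σ i = true
            then sg ((Equiv.piEquivPiSubtypeProd (fun i => σ i = true) (fun _ => Bool)).symm q i)
            else 0) := by
        intro i
        by_cases h : σ i = true <;> simp [h]
      rw [Finset.sum_congr rfl (fun i _ => flip i), ← Finset.sum_filter]
      rw [Finset.sum_subtype (p := fun i => ¬ σ i = true) (univ.filter (fun i => ¬ σ i = true)) (by simp)
        (fun i => sg ((Equiv.piEquivPiSubtypeProd (fun i => σ i = true) (fun _ => Bool)).symm q i))]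
      apply Finset.sum_congr rfl
      intro j _
      congr 1
      rw [ha]
      rw [dif_neg j.2]
    rw [hU, hV]
  rw [Fintype.sum_congr _ _ key]
  have hsplit : ∑ q : (∀ _ : {x // σ x = true}, Bool) × (∀ _ : {x // ¬ σ x = true}, Bool),
      (|∑ j : {x // ¬ σ x = true}, sg (q.2 j)| * |∑ j : {x // σ x = true}, sg (q.1 j)|)
      = (∑ y : (∀ _ : {x // ¬ σ x = true}, Bool), |∑ j : {x // ¬ σ x = true}, sg (y j)|)
        * (∑ x : (∀ _ : {x // σ x = true}, Bool), |∑ j : {x // σ x = true}, sg (x j)|) := by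
    rw [Fintype.sum_prod_type]
    simp only
    rw [Finset.sum_comm]
    rw [← Finset.sum_mul_sum]
  rw [hsplit, cube_sum, cube_sum]
  congr 2
  · rw [Fintype.card_subtype_compl, Fintype.card_subtype, Fintype.card_fin]
  · rw [Fintype.card_subtype]

lemma main_reduction (k : ℕ) :
    (∑ b : Fin (4 * k) → Bool,
        |(∑ j : Fin (4 * k), (if b j then (1 : ℝ) else -1)) *
          (∑ j : Fin (4 * k),
            (if (j : ℕ) < 2 * k then (if b j then (1 : ℝ) else -1)
             else -(if b j then (1 : ℝ) else -1)))|)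
      = ∑ m ∈ range (2 * k + 1), ((2 * k).choose m : ℝ) * (4 * (fb (2 * k - m) * fb m)) := by
  rw [stageA]
  rw [Finset.sum_congr rfl (fun a _ => stageB a)]
  rw [Finset.sum_comm]
  have h2 : ∀ σ : Fin (2*k) → Bool,
      ∑ a : Fin (2*k) → Bool,
        4 * (|∑ i, if σ i then (0:ℝ) else sg (a i)| * |∑ i, if σ i then sg (a i) else 0|)
      = 4 * (fb (2*k - #(univ.filter (fun i => σ i = true)))
          * fb #(univ.filter (fun i => σ i = true))) := by
    intro σ
    rw [← Finset.mul_sum, stageC σ]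
  rw [Finset.sum_congr rfl (fun σ _ => h2 σ)]
  have hcount := count_lemma (α := Fin (2*k)) (fun m => 4 * (fb (2*k - m) * fb m))
  rw [Fintype.card_fin] at hcount
  rw [hcount]

theorem stmt_7 (k : ℕ) (hk : 0 < k) :
    (∑ b : Fin (4 * k) → Bool,
        |(∑ j : Fin (4 * k), (if b j then (1 : ℝ) else -1)) *
          (∑ j : Fin (4 * k),
            (if (j : ℕ) < 2 * k then (if b j then (1 : ℝ) else -1)
             else -(if b j then (1 : ℝ) else -1)))|) / 2 ^ (4 * k)
      = ((4 * k : ℝ) ^ 2 / 2 ^ (4 * k + 1)) * (Nat.choose (2 * k) k : ℝ) ^ 2 := by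
  rw [main_reduction, final_identity k hk]
  rw [div_eq_iff (by positivity), pow_succ]
  field_simp
  ring
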